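/- Let a₁, ..., a_{2n-1} be distinct nonzero points of 𝔻 with a₁ + \bar{a₁}a_{2j}a_{2j+1} = a_{2j} + a_{2j+1} for j = 1, ..., n-1, and B(z) = z ∏_{k=1}^{2n-1}(z-a_k)/(1-\bar{a_k}z). If L is any line through the point a₁ intersecting the unit circle ∂𝔻 at the two points z₁ and z₂, then B(z₁) = B(z₂). -/

import Mathlib

open Complex

lemma denom_ne (w z : ℂ) (hw : ‖w‖ < 1) (hz : ‖z‖ = 1) :
    1 - (starRingEnd ℂ) w * z ≠ 0 := by
  intro h
  have h1 : (starRingEnd ℂ) w * z = 1 := by linear_combination -h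
  have h2 : ‖(starRingEnd ℂ) w * z‖ = ‖w‖ := by
    simp [map_mul, hz]
  rw [h1] at h2
  simp at h2
  rw [← h2] at hw
  exact lt_irrefl _ hw

lemma key (a a' p q p' q' z₁ z₂ : ℂ)
    (hd1 : 1 - p' * z₁ ≠ 0) (hd2 : 1 - q' * z₁ ≠ 0)
    (hd3 : 1 - p' * z₂ ≠ 0) (hd4 : 1 - q' * z₂ ≠ 0)
    (h1 : p + q = a + a' * p * q)
    (h1' : p' + q' = a' + a * p' * q')
    (h2 : z₁ + z₂ = a + a' * (z₁ * z₂)) :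
    (z₁ - p) / (1 - p' * z₁) * ((z₁ - q) / (1 - q' * z₁)) =
    (z₂ - p) / (1 - p' * z₂) * ((z₂ - q) / (1 - q' * z₂)) := by
  rw [div_mul_div_comm, div_mul_div_comm,
    div_eq_div_iff (mul_ne_zero hd1 hd2) (mul_ne_zero hd3 hd4)]
  linear_combination (z₂ - z₁) * ((1 - p'*q'*z₁*z₂) * h1 + (z₁*z₂ - p*q) * h1' + (p*q*p'*q' - 1) * h2)

lemma pair_prod (g : ℕ → ℂ) (m : ℕ) :
    ∏ k ∈ Finset.Icc 2 (2 * m + 1), g k =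
    ∏ j ∈ Finset.Icc 1 m, (g (2 * j) * g (2 * j + 1)) := by
  induction m with
  | zero => simp
  | succ m ih =>
    rw [show 2 * (m + 1) + 1 = (2 * m + 2) + 1 by ring,
      Finset.prod_Icc_succ_top (by omega), show 2*m+2 = (2*m+1)+1 by ring,
      Finset.prod_Icc_succ_top (by omega), ih,
      Finset.prod_Icc_succ_top (by omega : 1 ≤ m+1)]
    rw [show 2*m+1+1 = 2*(m+1) from by ring, mul_assoc]

/-- Under the zero conditions, any line through `a₁` meets the unit circle at
two points `z₁, z₂` with `B z₁ = B z₂`. -/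
theorem line_through_a1_equal_values (n : ℕ) (hn : 2 ≤ n) (a : ℕ → ℂ)
    (ha : ∀ k ∈ Finset.Icc 1 (2 * n - 1), ‖a k‖ < 1)
    (ha0 : ∀ k ∈ Finset.Icc 1 (2 * n - 1), a k ≠ 0)
    (hainj : Set.InjOn a (Finset.Icc 1 (2 * n - 1)))
    (hcond : ∀ j ∈ Finset.Icc 1 (n - 1),
      a 1 + (starRingEnd ℂ) (a 1) * a (2 * j) * a (2 * j + 1) =
        a (2 * j) + a (2 * j + 1))
    (B : ℂ → ℂ)
    (hB : ∀ z, B z = z * ∏ k ∈ Finset.Icc 1 (2 * n - 1),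
      (z - a k) / (1 - (starRingEnd ℂ) (a k) * z))
    (z₁ z₂ : ℂ) (hz₁ : ‖z₁‖ = 1) (hz₂ : ‖z₂‖ = 1)
    (hz12 : z₁ ≠ z₂) (hline : ∃ t : ℝ, a 1 = z₁ + (t : ℂ) * (z₂ - z₁)) :
    B z₁ = B z₂ := by
  obtain ⟨m, rfl⟩ : ∃ m, n = m + 1 := ⟨n - 1, by omega⟩
  have hm1 : 2 * (m + 1) - 1 = 2 * m + 1 := by omega
  rw [hm1] at ha ha0
  simp only [Nat.add_sub_cancel] at hcond
  -- chord condition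
  obtain ⟨t, ht⟩ := hline
  have u₁ : z₁ * (starRingEnd ℂ) z₁ = 1 := by
    rw [Complex.mul_conj, Complex.normSq_eq_norm_sq, hz₁]; norm_num
  have u₂ : z₂ * (starRingEnd ℂ) z₂ = 1 := by
    rw [Complex.mul_conj, Complex.normSq_eq_norm_sq, hz₂]; norm_num
  have htc : (starRingEnd ℂ) (a 1) =
      (starRingEnd ℂ) z₁ + (t : ℂ) * ((starRingEnd ℂ) z₂ - (starRingEnd ℂ) z₁) := by
    have := congrArg (starRingEnd ℂ) ht
    simpa using this
  have hchord : z₁ + z₂ = a 1 + (starRingEnd ℂ) (a 1) * (z₁ * z₂) := by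
    linear_combination -ht - (z₁*z₂)*htc - ((1:ℂ) - (t:ℂ))*z₂*u₁ - (t:ℂ)*z₁*u₂
  -- rewrite B and split the product
  rw [hB z₁, hB z₂, hm1]
  have hins : Finset.Icc 1 (2*m+1) = insert 1 (Finset.Icc 2 (2*m+1)) := by
    ext k
    simp only [Finset.mem_insert, Finset.mem_Icc]
    omega
  rw [hins, Finset.prod_insert (by simp), Finset.prod_insert (by simp),
    pair_prod, pair_prod]
  have h1mem : (1:ℕ) ∈ Finset.Icc 1 (2*m+1) := by simp
  -- first factor
  have E1 : z₁ * ((z₁ - a 1) / (1 - (starRingEnd ℂ) (a 1) * z₁)) =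
      z₂ * ((z₂ - a 1) / (1 - (starRingEnd ℂ) (a 1) * z₂)) := by
    have := key (a 1) ((starRingEnd ℂ) (a 1)) 0 (a 1) 0 ((starRingEnd ℂ) (a 1)) z₁ z₂
      (by simp) (denom_ne _ _ (ha 1 h1mem) hz₁) (by simp) (denom_ne _ _ (ha 1 h1mem) hz₂)
      (by ring) (by ring) hchord
    simpa using this
  -- pair factors
  have E2 : ∏ j ∈ Finset.Icc 1 m,
      ((z₁ - a (2*j)) / (1 - (starRingEnd ℂ) (a (2*j)) * z₁) *
       ((z₁ - a (2*j+1)) / (1 - (starRingEnd ℂ) (a (2*j+1)) * z₁))) =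
      ∏ j ∈ Finset.Icc 1 m,
      ((z₂ - a (2*j)) / (1 - (starRingEnd ℂ) (a (2*j)) * z₂) *
       ((z₂ - a (2*j+1)) / (1 - (starRingEnd ℂ) (a (2*j+1)) * z₂))) := by
    refine Finset.prod_congr rfl fun j hj => ?_
    have hj' := Finset.mem_Icc.mp hj
    have hmem1 : 2*j ∈ Finset.Icc 1 (2*m+1) := Finset.mem_Icc.mpr (by omega)
    have hmem2 : 2*j+1 ∈ Finset.Icc 1 (2*m+1) := Finset.mem_Icc.mpr (by omega)
    have hc := hcond j hj
    have hcc : (starRingEnd ℂ) (a 1) + a 1 * (starRingEnd ℂ) (a (2*j)) * (starRingEnd ℂ) (a (2*j+1)) =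
        (starRingEnd ℂ) (a (2*j)) + (starRingEnd ℂ) (a (2*j+1)) := by
      have := congrArg (starRingEnd ℂ) hc
      simpa [mul_comm, mul_assoc, mul_left_comm] using this
    exact key (a 1) ((starRingEnd ℂ) (a 1)) (a (2*j)) (a (2*j+1))
      ((starRingEnd ℂ) (a (2*j))) ((starRingEnd ℂ) (a (2*j+1))) z₁ z₂
      (denom_ne _ _ (ha _ hmem1) hz₁) (denom_ne _ _ (ha _ hmem2) hz₁)
      (denom_ne _ _ (ha _ hmem1) hz₂) (denom_ne _ _ (ha _ hmem2) hz₂)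
      (by linear_combination -hc) (by linear_combination -hcc) hchord
  rw [← mul_assoc, ← mul_assoc, E1, E2]
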